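/- Let p_0 = 0 ∈ ℝ^d and let p_1, ..., p_d be the standard unit basis vectors of ℝ^d. For contraction ratios λ_0, ..., λ_d ∈ (0,1), define S_i(x) = λ_i x + (1−λ_i) p_i. If λ_0 + λ_1 + ⋯ + λ_d ≥ d, then the simplex Δ = {x ∈ ℝ^d : x_j ≥ 0 for all j, Σ_j x_j ≤ 1} satisfies Δ = ⋃_{i=0}^d S_i(Δ). In particular the attractor of the IFS {S_i}_{i=0}^d equals Δ = conv{p_0, ..., p_d}. -/
import Mathlib

/-- with `p 0 = 0` and `p i = eᵢ` the standard basis vectors of `ℝ^d`, and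
`S_i(x) = λ_i x + (1-λ_i) p_i` with `λ_i ∈ (0,1)`, if `λ_0 + ⋯ + λ_d ≥ d` then the simplex
`Δ = {x : xⱼ ≥ 0, Σ xⱼ ≤ 1}` satisfies `Δ = ⋃ᵢ S_i(Δ)`; in particular the attractor of the
IFS equals `Δ = conv{p_0, …, p_d}`. -/
theorem simplex_no_holes (d : ℕ) (hd : 1 ≤ d)
    (p : Fin (d + 1) → Fin d → ℝ)
    (hp : ∀ i j, p i j = if (i : ℕ) = (j : ℕ) + 1 then 1 else 0)
    (lam : Fin (d + 1) → ℝ) (hlam : ∀ i, lam i ∈ Set.Ioo (0 : ℝ) 1)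
    (hsum : (d : ℝ) ≤ ∑ i, lam i)
    (Δ : Set (Fin d → ℝ))
    (hΔ : Δ = {x | (∀ j, 0 ≤ x j) ∧ ∑ j, x j ≤ 1}) :
    Δ = (⋃ i, (fun x => lam i • x + (1 - lam i) • p i) '' Δ) ∧
      Δ = convexHull ℝ (Set.range p) := by
  have hp0 : p 0 = 0 := by funext j; simp [hp]
  have hpsucc : ∀ (j : Fin d) (k : Fin d), p j.succ k = if j = k then 1 else 0 := by
    intro j k
    rw [hp]
    simp [Fin.val_succ, Fin.val_inj]
  have hpsum1 : ∀ j : Fin d, ∑ k, p j.succ k = 1 := by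
    intro j
    simp only [hpsucc]
    rw [Finset.sum_ite_eq]
    simp
  have hpsum_le : ∀ i, ∑ k, p i k ≤ 1 := by
    intro i
    induction i using Fin.cases with
    | zero => simp [hp0]
    | succ j => rw [hpsum1]
  have hpnn : ∀ i k, 0 ≤ p i k := by
    intro i k; rw [hp]; positivity
  have hlamsucc : (d : ℝ) - lam 0 ≤ ∑ j : Fin d, lam j.succ := by
    rw [Fin.sum_univ_succ] at hsum; linarith
  subst hΔ
  constructor
  · ext x
    simp only [Set.mem_iUnion, Set.mem_image, Set.mem_setOf_eq]
    constructor
    · rintro ⟨hx0, hxs⟩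
      by_cases h0 : ∑ j, x j ≤ lam 0
      · have hl := hlam 0
        refine ⟨0, (lam 0)⁻¹ • x, ⟨?_, ?_⟩, ?_⟩
        · intro j
          simp only [Pi.smul_apply, smul_eq_mul]
          exact mul_nonneg (inv_nonneg.2 hl.1.le) (hx0 j)
        · simp only [Pi.smul_apply, smul_eq_mul]
          rw [← Finset.mul_sum]
          have h2 : (lam 0)⁻¹ * ∑ j, x j ≤ (lam 0)⁻¹ * lam 0 :=
            mul_le_mul_of_nonneg_left h0 (inv_nonneg.2 hl.1.le)
          rwa [inv_mul_cancel₀ hl.1.ne'] at h2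
        · rw [hp0, smul_zero, add_zero, smul_inv_smul₀ hl.1.ne']
      · push_neg at h0
        have hex : ∃ j : Fin d, 1 - lam j.succ ≤ x j := by
          by_contra hc
          push_neg at hc
          have hne : (Finset.univ : Finset (Fin d)).Nonempty := by
            have : 0 < d := hd
            exact ⟨⟨0, this⟩, Finset.mem_univ _⟩
          have h1 : ∑ j, x j < ∑ j : Fin d, (1 - lam j.succ) :=
            Finset.sum_lt_sum_of_nonempty hne fun j _ => hc j
          have h2 : ∑ j : Fin d, (1 - lam j.succ) = d - ∑ j : Fin d, lam j.succ := by
            rw [Finset.sum_sub_distrib]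
            simp
          linarith
        obtain ⟨j, hj⟩ := hex
        have hl := hlam j.succ
        refine ⟨j.succ, (lam j.succ)⁻¹ • (x - (1 - lam j.succ) • p j.succ), ⟨?_, ?_⟩, ?_⟩
        · intro k
          simp only [Pi.smul_apply, Pi.sub_apply, smul_eq_mul]
          rcases eq_or_ne j k with rfl | hjk
          · rw [hpsucc, if_pos rfl, mul_one]
            exact mul_nonneg (inv_nonneg.2 hl.1.le) (by linarith)
          · rw [hpsucc, if_neg hjk, mul_zero, sub_zero]
            exact mul_nonneg (inv_nonneg.2 hl.1.le) (hx0 k)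
        · simp only [Pi.smul_apply, Pi.sub_apply, smul_eq_mul]
          rw [← Finset.mul_sum, Finset.sum_sub_distrib, ← Finset.mul_sum, hpsum1, mul_one]
          have h2 : (lam j.succ)⁻¹ * (∑ k, x k - (1 - lam j.succ)) ≤ (lam j.succ)⁻¹ * lam j.succ :=
            mul_le_mul_of_nonneg_left (by linarith) (inv_nonneg.2 hl.1.le)
          rwa [inv_mul_cancel₀ hl.1.ne'] at h2
        · rw [smul_inv_smul₀ hl.1.ne']
          abel
    · rintro ⟨i, y, ⟨hy0, hys⟩, rfl⟩
      have hl := hlam i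
      constructor
      · intro k
        simp only [Pi.add_apply, Pi.smul_apply, smul_eq_mul]
        have := hy0 k
        have := hpnn i k
        nlinarith [hl.1, hl.2]
      · simp only [Pi.add_apply, Pi.smul_apply, smul_eq_mul]
        rw [Finset.sum_add_distrib, ← Finset.mul_sum, ← Finset.mul_sum]
        nlinarith [hl.1, hl.2, hpsum_le i, hys]
  · apply Set.Subset.antisymm
    · intro x hx
      obtain ⟨hx0, hxs⟩ := hx
      set w : Fin (d + 1) → ℝ := fun i => Fin.cases (1 - ∑ j, x j) (fun j => x j) i with hw
      have hwnn : ∀ i ∈ Finset.univ, 0 ≤ w i := by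
        intro i _
        induction i using Fin.cases with
        | zero => simp [hw]; linarith
        | succ j => simpa [hw] using hx0 j
      have hwsum : ∑ i, w i = 1 := by
        rw [Fin.sum_univ_succ]
        simp [hw]
      have hcm : Finset.univ.centerMass w p = x := by
        rw [Finset.centerMass, hwsum, inv_one, one_smul]
        funext k
        simp only [Finset.sum_apply, Pi.smul_apply, smul_eq_mul]
        rw [Fin.sum_univ_succ]
        simp only [hw, Fin.cases_zero, Fin.cases_succ, hp0, hpsucc]
        simp only [Pi.zero_apply, mul_zero, zero_add, mul_ite, mul_one, mul_zero]
        rw [Finset.sum_ite_eq']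
        simp
      rw [← hcm]
      exact Finset.centerMass_mem_convexHull _ hwnn (by rw [hwsum]; norm_num)
        (fun i _ => Set.mem_range_self i)
    · apply convexHull_min
      · rintro _ ⟨i, rfl⟩
        exact ⟨hpnn i, hpsum_le i⟩
      · intro x hx y hy a b ha hb hab
        constructor
        · intro j
          simp only [Pi.add_apply, Pi.smul_apply, smul_eq_mul]
          have := hx.1 j
          have := hy.1 j
          positivity
        · simp only [Pi.add_apply, Pi.smul_apply, smul_eq_mul]
          rw [Finset.sum_add_distrib, ← Finset.mul_sum, ← Finset.mul_sum]
          nlinarith [hx.2, hy.2]
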